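/- Let P = (V, ≤) be a poset and G its incomparability graph. For every subset X of V, the diameter of X in G equals the diameter of its order-convex hull Conv_P(X) = ↓X ∩ ↑X in G, i.e., sup{d_G(x,y) : x,y ∈ X} = sup{d_G(x,y) : x,y ∈ Conv_P(X)}. -/

import Mathlib

/-- The incomparability graph of a poset: edges are pairs of incomparable elements. -/
def incompGraph (V : Type*) [PartialOrder V] : SimpleGraph V where
  Adj a b := ¬ a ≤ b ∧ ¬ b ≤ a
  symm := by constructor; intro a b h; exact ⟨h.2, h.1⟩
  loopless := by constructor; intro a h; exact h.1 le_rfl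

/-- The order-convex hull of a set: all elements between two members of the set. -/
def convHull {V : Type*} [PartialOrder V] (X : Set V) : Set V :=
  {z | ∃ x ∈ X, ∃ y ∈ X, x ≤ z ∧ z ≤ y}

lemma key_walk {V : Type*} [PartialOrder V] (n : ℕ) :
    ∀ (u x y z : V) (p : (incompGraph V).Walk x u) (q : (incompGraph V).Walk y u),
      p.length + q.length ≤ n → x ≤ z → z ≤ y →
      (incompGraph V).edist z u ≤ max (p.length : ℕ∞) (q.length : ℕ∞) := by
  induction n with
  | zero =>
    intro u x y z p q hn hxz hzy
    have hp : p.length = 0 := by omega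
    have hq : q.length = 0 := by omega
    have hxu : x = u := (SimpleGraph.Walk.eq_of_length_eq_zero hp)
    have hyu : y = u := (SimpleGraph.Walk.eq_of_length_eq_zero hq)
    have : z = u := le_antisymm (hyu ▸ hzy) (hxu ▸ hxz)
    simp [this, SimpleGraph.edist_self]
  | succ n ih =>
    intro u x y z p q hn hxz hzy
    cases p with
    | nil =>
      -- x = u
      cases q with
      | nil =>
        have : z = u := le_antisymm hzy hxz
        simp [this, SimpleGraph.edist_self]
      | cons hadj q' =>
        rename_i y'
        by_cases hc : ¬ z ≤ y' ∧ ¬ y' ≤ z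
        · -- z adjacent to y'
          have hzy' : (incompGraph V).Adj z y' := hc
          calc (incompGraph V).edist z u ≤
              (incompGraph V).edist z y' + (incompGraph V).edist y' u :=
                SimpleGraph.edist_triangle
            _ ≤ 1 + (q'.length : ℕ∞) := by
                gcongr
                · exact le_trans (SimpleGraph.edist_le (hzy'.toWalk)) (by simp)
                · exact SimpleGraph.edist_le q'
            _ ≤ max ((SimpleGraph.Walk.nil : (incompGraph V).Walk u u).length : ℕ∞)
                (((SimpleGraph.Walk.cons hadj q').length : ℕ∞)) := by
                refine le_max_of_le_right ?_
                push_cast [SimpleGraph.Walk.length_cons]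
                rw [add_comm]
        · -- z comparable to y'; since z ≤ y and y, y' incomparable, z ≤ y'
          push_neg at hc
          have hzle : z ≤ y' := by
            by_cases h1 : z ≤ y'
            · exact h1
            · exact absurd (le_trans (hc h1) hzy) hadj.2
          have hb : (SimpleGraph.Walk.nil : (incompGraph V).Walk u u).length + q'.length ≤ n := by
            simp only [SimpleGraph.Walk.length_nil, SimpleGraph.Walk.length_cons] at hn ⊢
            omega
          have := ih u u y' z SimpleGraph.Walk.nil q' hb hxz hzle
          refine le_trans this (le_max_of_le_right ?_)
          push_cast [SimpleGraph.Walk.length_cons, SimpleGraph.Walk.length_nil]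
          exact max_le (by simp) le_self_add
    | cons hadj p' =>
      rename_i x'
      by_cases hc : ¬ z ≤ x' ∧ ¬ x' ≤ z
      · have hzx' : (incompGraph V).Adj z x' := hc
        calc (incompGraph V).edist z u ≤
            (incompGraph V).edist z x' + (incompGraph V).edist x' u :=
              SimpleGraph.edist_triangle
          _ ≤ 1 + (p'.length : ℕ∞) := by
              gcongr
              · exact le_trans (SimpleGraph.edist_le (hzx'.toWalk)) (by simp)
              · exact SimpleGraph.edist_le p'
          _ ≤ max (((SimpleGraph.Walk.cons hadj p').length : ℕ∞)) ((q.length : ℕ∞)) := by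
              refine le_max_of_le_left ?_
              push_cast [SimpleGraph.Walk.length_cons]
              rw [add_comm]
      · push_neg at hc
        have hx'le : x' ≤ z := by
          by_cases h1 : z ≤ x'
          · exact absurd (le_trans hxz h1) hadj.1
          · exact hc h1
        have hb : p'.length + q.length ≤ n := by
          simp only [SimpleGraph.Walk.length_cons] at hn
          omega
        have := ih u x' y z p' q hb hx'le hzy
        refine le_trans this (max_le_max ?_ le_rfl)
        push_cast [SimpleGraph.Walk.length_cons]
        exact le_self_add

lemma key_edist {V : Type*} [PartialOrder V] {x y z : V} (hxz : x ≤ z) (hzy : z ≤ y) (u : V) :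
    (incompGraph V).edist z u ≤
      max ((incompGraph V).edist x u) ((incompGraph V).edist y u) := by
  by_cases hx : (incompGraph V).edist x u = ⊤
  · simp [hx]
  by_cases hy : (incompGraph V).edist y u = ⊤
  · simp [hy]
  obtain ⟨p, hp⟩ := SimpleGraph.exists_walk_of_edist_ne_top hx
  obtain ⟨q, hq⟩ := SimpleGraph.exists_walk_of_edist_ne_top hy
  have := key_walk (p.length + q.length) u x y z p q le_rfl hxz hzy
  rwa [hp, hq] at this

theorem stmt19 {V : Type*} [PartialOrder V] (X : Set V) :
    (⨆ x ∈ X, ⨆ y ∈ X, (incompGraph V).edist x y) =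
      ⨆ x ∈ convHull X, ⨆ y ∈ convHull X, (incompGraph V).edist x y := by
  apply le_antisymm
  · refine iSup₂_le fun x hx => iSup₂_le fun y hy => ?_
    have hx' : x ∈ convHull X := ⟨x, hx, x, hx, le_rfl, le_rfl⟩
    have hy' : y ∈ convHull X := ⟨y, hy, y, hy, le_rfl, le_rfl⟩
    exact le_iSup₂_of_le x hx' (le_iSup₂_of_le y hy' le_rfl)
  · refine iSup₂_le fun z hz => iSup₂_le fun w hw => ?_
    obtain ⟨x1, hx1, y1, hy1, hx1z, hzy1⟩ := hz
    obtain ⟨x2, hx2, y2, hy2, hx2w, hwy2⟩ := hw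
    have bound : ∀ a, a ∈ X → (incompGraph V).edist a w ≤
        ⨆ x ∈ X, ⨆ y ∈ X, (incompGraph V).edist x y := by
      intro a ha
      have h1 := key_edist hx2w hwy2 a
      rw [SimpleGraph.edist_comm] at h1
      refine le_trans h1 (max_le ?_ ?_)
      · rw [SimpleGraph.edist_comm]
        exact le_iSup₂_of_le a ha (le_iSup₂_of_le x2 hx2 le_rfl)
      · rw [SimpleGraph.edist_comm]
        exact le_iSup₂_of_le a ha (le_iSup₂_of_le y2 hy2 le_rfl)
    have h2 := key_edist hx1z hzy1 w
    refine le_trans h2 (max_le (bound x1 hx1) (bound y1 hy1))
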